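/- arXiv:1703.08589 — 6 statements merged into one kernel-verified Lean document; each statement's English description precedes it below -/
import Mathlib

section
/- Let R be an N×N Hermitian positive semi-definite matrix with eigenvalues λ₁ ≤ ... ≤ λ_N and unit-norm dominant eigenvector e_N. Let d be the unimodular vector matching the arguments of e_N (with d(i) = 1 where e_N(i) = 0). Then d^H R d ≥ λ_N + (N−1)λ₁, and consequently (d^H R d)/(max over unimodular s of s^H R s) ≥ (λ_N + (N−1)λ₁)/(λ_N N) whenever λ_N > 0. -/
open Matrix Finset
open scoped ComplexOrder

/-- Performance bound for the dominant-eigenvector-matching heuristic: if `R` is Hermitian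
positive semidefinite with orthonormal eigenbasis `e` and nondecreasing eigenvalues `lam`,
and `d` is the unimodular vector matching the arguments of the dominant eigenvector, then
`dᴴ R d ≥ lam_N + (N-1) lam_1`, and relative to the optimal unimodular value the ratio is
at least `(lam_N + (N-1) lam_1) / (lam_N N)` when `lam_N > 0`. -/
theorem stmt_3 (N : ℕ) (hN : 0 < N) (R : Matrix (Fin N) (Fin N) ℂ)
    (hR : R.IsHermitian) (hpsd : R.PosSemidef)
    (e : Fin N → Fin N → ℂ) (lam : Fin N → ℝ)
    (horth : ∀ i j, star (e i) ⬝ᵥ e j = if i = j then (1 : ℂ) else 0)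
    (heig : ∀ i, R *ᵥ e i = (lam i : ℂ) • e i)
    (hmono : Monotone lam)
    (eN : Fin N → ℂ) (heN : eN = e ⟨N - 1, Nat.sub_lt hN one_pos⟩)
    (d : Fin N → ℂ)
    (hd : ∀ i, d i = if eN i = 0 then 1 else eN i / (‖eN i‖ : ℂ))
    (o : Fin N → ℂ) (ho : o ∈ {s : Fin N → ℂ | ∀ i, ‖s i‖ = 1})
    (hopt : IsMaxOn (fun s : Fin N → ℂ => (star s ⬝ᵥ R *ᵥ s).re)
      {s : Fin N → ℂ | ∀ i, ‖s i‖ = 1} o) :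
    lam ⟨N - 1, Nat.sub_lt hN one_pos⟩ + (N - 1) * lam ⟨0, hN⟩ ≤ (star d ⬝ᵥ R *ᵥ d).re ∧
    (0 < lam ⟨N - 1, Nat.sub_lt hN one_pos⟩ →
      (lam ⟨N - 1, Nat.sub_lt hN one_pos⟩ + (N - 1) * lam ⟨0, hN⟩) /
          (lam ⟨N - 1, Nat.sub_lt hN one_pos⟩ * N) ≤
        (star d ⬝ᵥ R *ᵥ d).re / (star o ⬝ᵥ R *ᵥ o).re) := by
  classical
  set M : Fin N := ⟨N - 1, Nat.sub_lt hN one_pos⟩ with hM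
  set Z : Fin N := ⟨0, hN⟩ with hZ
  -- completeness relation
  have hcomp : ∀ k l, (∑ i, (starRingEnd ℂ) (e i k) * e i l) = if k = l then (1:ℂ) else 0 := by
    have hU : (Matrix.of e) * (Matrix.of e)ᴴ = 1 := by
      ext i j
      have h := horth i j
      simp only [dotProduct, Pi.star_apply, Complex.star_def] at h
      have hconj' : (∑ k, e i k * (starRingEnd ℂ) (e j k))
          = (starRingEnd ℂ) (∑ k, (starRingEnd ℂ) (e i k) * e j k) := by
        simp [map_sum, mul_comm]
      simp only [Matrix.mul_apply, Matrix.conjTranspose_apply, Matrix.of_apply, Matrix.one_apply,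
        Complex.star_def]
      rw [hconj', h]
      split <;> simp
    have hU' := mul_eq_one_comm.mp hU
    intro k l
    have h := congrFun (congrFun hU' k) l
    simpa [Matrix.mul_apply, Matrix.conjTranspose_apply, Matrix.one_apply, Complex.star_def] using h
  set c : (Fin N → ℂ) → Fin N → ℂ := fun v i => star (e i) ⬝ᵥ v with hc
  -- expansion in the eigenbasis
  have hexp : ∀ (v : Fin N → ℂ) (l : Fin N), v l = ∑ i, c v i * e i l := by
    intro v l
    have h1 : ∑ i, c v i * e i l
        = ∑ k, (∑ i, (starRingEnd ℂ) (e i k) * e i l) * v k := by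
      simp only [hc, dotProduct, Pi.star_apply, Complex.star_def, Finset.sum_mul]
      rw [Finset.sum_comm]
      refine Finset.sum_congr rfl fun k _ => Finset.sum_congr rfl fun i _ => by ring
    rw [h1]
    simp [hcomp]
  have hRv : ∀ (v : Fin N → ℂ) (l : Fin N), (R *ᵥ v) l = ∑ i, c v i * ((lam i : ℂ) * e i l) := by
    intro v l
    have h1 : (R *ᵥ v) l = ∑ m, R l m * ∑ i, c v i * e i m := by
      simp only [mulVec, dotProduct]
      exact Finset.sum_congr rfl fun m _ => by rw [← hexp v m]
    rw [h1]
    have h2 : ∑ m, R l m * ∑ i, c v i * e i m = ∑ i, c v i * ∑ m, R l m * e i m := by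
      simp only [Finset.mul_sum]
      rw [Finset.sum_comm]
      exact Finset.sum_congr rfl fun i _ => Finset.sum_congr rfl fun m _ => by ring
    rw [h2]
    refine Finset.sum_congr rfl fun i _ => ?_
    congr 1
    have := congrFun (heig i) l
    simpa [mulVec, dotProduct] using this
  have hconj : ∀ (v : Fin N → ℂ) (i : Fin N),
      ∑ l, (starRingEnd ℂ) (v l) * e i l = (starRingEnd ℂ) (c v i) := by
    intro v i
    simp [hc, dotProduct, map_sum, mul_comm]
  have hquad : ∀ (v : Fin N → ℂ),
      star v ⬝ᵥ R *ᵥ v = ∑ i, (lam i : ℂ) * (c v i * (starRingEnd ℂ) (c v i)) := by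
    intro v
    have h1 : star v ⬝ᵥ R *ᵥ v
        = ∑ l, (starRingEnd ℂ) (v l) * ∑ i, c v i * ((lam i : ℂ) * e i l) := by
      simp only [dotProduct, Pi.star_apply, Complex.star_def]
      exact Finset.sum_congr rfl fun l _ => by rw [hRv v l]
    rw [h1]
    have h2 : ∑ l, (starRingEnd ℂ) (v l) * ∑ i, c v i * ((lam i : ℂ) * e i l)
        = ∑ i, (lam i : ℂ) * (c v i * ∑ l, (starRingEnd ℂ) (v l) * e i l) := by
      simp only [Finset.mul_sum]
      rw [Finset.sum_comm]
      exact Finset.sum_congr rfl fun i _ => Finset.sum_congr rfl fun l _ => by ring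
    rw [h2]
    exact Finset.sum_congr rfl fun i _ => by rw [hconj]
  have hnorm : ∀ (v : Fin N → ℂ),
      star v ⬝ᵥ v = ∑ i, c v i * (starRingEnd ℂ) (c v i) := by
    intro v
    have h1 : star v ⬝ᵥ v = ∑ l, (starRingEnd ℂ) (v l) * ∑ i, c v i * e i l := by
      simp only [dotProduct, Pi.star_apply, Complex.star_def]
      exact Finset.sum_congr rfl fun l _ => by rw [← hexp v l]
    rw [h1]
    have h2 : ∑ l, (starRingEnd ℂ) (v l) * ∑ i, c v i * e i l
        = ∑ i, c v i * ∑ l, (starRingEnd ℂ) (v l) * e i l := by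
      simp only [Finset.mul_sum]
      rw [Finset.sum_comm]
      exact Finset.sum_congr rfl fun i _ => Finset.sum_congr rfl fun l _ => by ring
    rw [h2]
    exact Finset.sum_congr rfl fun i _ => by rw [hconj]
  -- real quadratic form
  have hQ : ∀ (v : Fin N → ℂ),
      (star v ⬝ᵥ R *ᵥ v).re = ∑ i, lam i * Complex.normSq (c v i) := by
    intro v
    rw [hquad v]
    simp_rw [Complex.mul_conj, ← Complex.ofReal_mul, ← Complex.ofReal_sum]
    exact Complex.ofReal_re _
  -- total weight for unimodular vectors
  have hsumN : ∀ (v : Fin N → ℂ), (∀ i, ‖v i‖ = 1) →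
      ∑ i, Complex.normSq (c v i) = N := by
    intro v hv
    have h1 := hnorm v
    have h2 : star v ⬝ᵥ v = (N : ℂ) := by
      have hterm : ∀ l : Fin N, (starRingEnd ℂ) (v l) * v l = 1 := by
        intro l
        rw [mul_comm, Complex.mul_conj, Complex.normSq_eq_norm_sq, hv l]
        norm_num
      simp [dotProduct, Pi.star_apply, Complex.star_def, hterm]
    rw [h2] at h1
    simp_rw [Complex.mul_conj, ← Complex.ofReal_sum] at h1
    exact_mod_cast h1.symm
  -- eigenvalues are nonnegative
  have hlamnn : ∀ i, 0 ≤ lam i := by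
    intro i
    have h := hpsd.dotProduct_mulVec_nonneg (e i)
    rw [heig i] at h
    have h2 : star (e i) ⬝ᵥ ((lam i : ℂ) • e i) = (lam i : ℂ) := by
      rw [dotProduct_smul, horth i i]
      simp
    rw [h2] at h
    exact_mod_cast (Complex.zero_le_real).mp h
  -- d is unimodular
  have hd1 : ∀ i, ‖d i‖ = 1 := by
    intro i
    rw [hd i]
    split
    · simp
    · rename_i hz
      have ha : ‖eN i‖ ≠ 0 := by simpa using hz
      simp [norm_div, div_self ha]
  -- the key inner product
  have hterm : ∀ k, (starRingEnd ℂ) (eN k) * d k = (‖eN k‖ : ℂ) := by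
    intro k
    rw [hd k]
    split
    · rename_i hz; simp [hz]
    · rename_i hz
      have ha : (‖eN k‖ : ℂ) ≠ 0 := by simpa using hz
      field_simp
      rw [mul_comm, Complex.mul_conj, Complex.normSq_eq_norm_sq]
      push_cast
      ring
  have hone : ∑ k, Complex.normSq (eN k) = 1 := by
    have h := horth M M
    rw [← heN] at h
    simp only [dotProduct, Pi.star_apply, Complex.star_def] at h
    simp_rw [mul_comm, Complex.mul_conj, ← Complex.ofReal_sum] at h
    simp only [eq_self_iff_true, if_true] at h
    exact_mod_cast h
  have habs_le : ∀ k, ‖eN k‖ ≤ 1 := by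
    intro k
    have h1 : Complex.normSq (eN k) ≤ 1 := by
      rw [← hone]
      exact Finset.single_le_sum (fun j _ => Complex.normSq_nonneg _) (mem_univ k)
    nlinarith [norm_nonneg (eN k), Complex.sq_norm (eN k)]
  have hr : 1 ≤ ∑ k, ‖eN k‖ := by
    calc (1:ℝ) = ∑ k, Complex.normSq (eN k) := hone.symm
      _ ≤ ∑ k, ‖eN k‖ := by
        refine Finset.sum_le_sum fun k _ => ?_
        nlinarith [norm_nonneg (eN k), Complex.sq_norm (eN k), habs_le k]
  have hcdM : c d M = ((∑ k, ‖eN k‖ : ℝ) : ℂ) := by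
    simp only [hc, dotProduct, Pi.star_apply, Complex.star_def, ← heN]
    rw [Complex.ofReal_sum]
    exact Finset.sum_congr rfl fun k _ => hterm k
  have hq1 : 1 ≤ Complex.normSq (c d M) := by
    rw [hcdM, Complex.normSq_ofReal]
    nlinarith [hr]
  -- part 1
  have hsumd : ∑ i, Complex.normSq (c d i) = N := hsumN d hd1
  have hZM : lam Z ≤ lam M := by
    refine hmono ?_
    simp only [hZ, hM, Fin.mk_le_mk]
    omega
  have part1 : lam M + ((N:ℝ) - 1) * lam Z ≤ (star d ⬝ᵥ R *ᵥ d).re := by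
    rw [hQ d]
    have hsplit : ∑ i, lam i * Complex.normSq (c d i)
        = lam M * Complex.normSq (c d M)
          + ∑ i ∈ univ.erase M, lam i * Complex.normSq (c d i) :=
      (Finset.add_sum_erase _ _ (mem_univ M)).symm
    have hqsplit : Complex.normSq (c d M) + ∑ i ∈ univ.erase M, Complex.normSq (c d i) = N := by
      have h := Finset.add_sum_erase univ (fun i => Complex.normSq (c d i)) (mem_univ M)
      rw [h]
      exact hsumd
    have hlow : lam Z * ((N:ℝ) - Complex.normSq (c d M))
        ≤ ∑ i ∈ univ.erase M, lam i * Complex.normSq (c d i) := by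
      have h1 : ∑ i ∈ univ.erase M, Complex.normSq (c d i)
          = (N:ℝ) - Complex.normSq (c d M) := by linarith
      rw [← h1, Finset.mul_sum]
      refine Finset.sum_le_sum fun i _ => ?_
      refine mul_le_mul_of_nonneg_right (hmono ?_) (Complex.normSq_nonneg _)
      rw [Fin.le_def]
      exact Nat.zero_le _
    rw [hsplit]
    nlinarith [mul_nonneg (sub_nonneg.2 hZM) (sub_nonneg.2 hq1)]
  refine ⟨part1, fun hlM => ?_⟩
  -- part 2
  have hQo_le : (star o ⬝ᵥ R *ᵥ o).re ≤ lam M * N := by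
    rw [hQ o]
    calc ∑ i, lam i * Complex.normSq (c o i)
        ≤ ∑ i, lam M * Complex.normSq (c o i) := by
          refine Finset.sum_le_sum fun i _ => ?_
          refine mul_le_mul_of_nonneg_right (hmono ?_) (Complex.normSq_nonneg _)
          have hi := i.isLt
          rw [Fin.le_def]
          simp only [hM, Fin.val_mk]
          omega
      _ = lam M * N := by rw [← Finset.mul_sum, hsumN o ho]
  have hdo : (star d ⬝ᵥ R *ᵥ d).re ≤ (star o ⬝ᵥ R *ᵥ o).re := hopt hd1
  have hApos : 0 < lam M + ((N:ℝ) - 1) * lam Z := by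
    have hN1 : (1:ℝ) ≤ (N:ℝ) := by exact_mod_cast hN
    nlinarith [hlamnn Z]
  have hQo_pos : 0 < (star o ⬝ᵥ R *ᵥ o).re := lt_of_lt_of_le hApos (le_trans part1 hdo)
  exact div_le_div₀ (le_trans hApos.le part1) part1 hQo_pos hQo_le
end

section
/- Let R be an N×N Hermitian matrix with entries r_{ij}, and define δ₁ = 0 and δ_k = Σ_{i=1}^{k−1} |r_{ki}| for k = 2,...,N. Define a_k = 2δ_k + 4Σ_{i=1}^{N−k} δ_{k+i} for k < N and a_N = 2δ_N, and let R̄ be R with its diagonal replaced by (a₁,...,a_N). Then for any unimodular strings B = (b₁,...,b_k) and A = (b₁,...,b_k,...,b_l) with k ≤ l ≤ N (B a prefix of A), the difference F(A) − F(B) satisfies 4Σ_{i=k+1}^{l} Σ_{j=1}^{N−i} δ_{i+j} ≤ F(A) − F(B) ≤ 4Σ_{i=k+1}^{l} (δ_i + Σ_{j=1}^{N−i} δ_{i+j}), where F(C) = C^H R̄_m C for a string C of length m and R̄_m is the leading m×m principal submatrix of R̄. -/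
open Matrix

/-- `delta R k = Σ_{i<k} |r_{k i}|` (so `delta R 0 = 0`). -/
noncomputable def delta {N : ℕ} (R : Matrix (Fin N) (Fin N) ℂ) (k : Fin N) : ℝ :=
  ∑ i ∈ Finset.Iio k, ‖R k i‖

/-- The modified diagonal entries `a_k = 2 δ_k + 4 Σ_{j>k} δ_j` (for the last index the
second sum is empty, giving `a_N = 2 δ_N`). -/
noncomputable def adiag {N : ℕ} (R : Matrix (Fin N) (Fin N) ℂ) (k : Fin N) : ℝ :=
  2 * delta R k + 4 * ∑ j ∈ Finset.Ioi k, delta R j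

/-- `R̄`: same off-diagonal entries as `R`, with diagonal replaced by `a`. -/
noncomputable def Rbar {N : ℕ} (R : Matrix (Fin N) (Fin N) ℂ) : Matrix (Fin N) (Fin N) ℂ :=
  fun i j => if i = j then (adiag R i : ℂ) else R i j

/-- `F m b = Cᴴ R̄_m C` where `C` is the prefix of length `m` of the string `b` and
`R̄_m` is the leading `m × m` principal submatrix of `R̄`. -/
noncomputable def Fval {N : ℕ} (R : Matrix (Fin N) (Fin N) ℂ) (m : ℕ) (hm : m ≤ N)
    (b : Fin N → ℂ) : ℝ :=
  (star (fun i : Fin m => b (Fin.castLE hm i)) ⬝ᵥ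
      ((Rbar R).submatrix (Fin.castLE hm) (Fin.castLE hm)) *ᵥ
        fun i : Fin m => b (Fin.castLE hm i)).re


lemma Iio_eq_map {N m : ℕ} (hm : m < N) :
    Finset.Iio (⟨m, hm⟩ : Fin N) = Finset.map (Fin.castLEEmb hm.le) Finset.univ := by
  ext i
  simp only [Finset.mem_Iio, Finset.mem_map, Finset.mem_univ, true_and, Fin.lt_def]
  constructor
  · intro h; exact ⟨⟨i, h⟩, rfl⟩
  · rintro ⟨j, rfl⟩; exact j.2

lemma sum_Iio_fin {N m : ℕ} (hm : m < N) {α : Type*} [AddCommMonoid α] (f : Fin N → α) :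
    ∑ i ∈ Finset.Iio (⟨m, hm⟩ : Fin N), f i
      = ∑ i : Fin m, f (Fin.castLE hm.le i) := by
  rw [Iio_eq_map hm, Finset.sum_map]; rfl

lemma Fval_eq {N : ℕ} (R : Matrix (Fin N) (Fin N) ℂ) (m : ℕ) (hm : m ≤ N) (b : Fin N → ℂ) :
    Fval R m hm b = (∑ i : Fin m, ∑ j : Fin m,
      (starRingEnd ℂ) (b (Fin.castLE hm i)) * Rbar R (Fin.castLE hm i) (Fin.castLE hm j)
        * b (Fin.castLE hm j)).re := by
  simp only [Fval, dotProduct, mulVec, dotProduct, Pi.star_apply, submatrix_apply,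
    Finset.mul_sum, RCLike.star_def]
  congr 1
  refine Finset.sum_congr rfl fun i _ => Finset.sum_congr rfl fun j _ => by ring

lemma Fval_succ {N : ℕ} (R : Matrix (Fin N) (Fin N) ℂ) (hR : R.IsHermitian)
    (m : ℕ) (hm : m < N) (b : Fin N → ℂ)
    (hbm : ‖b ⟨m, hm⟩‖ = 1) :
    Fval R (m+1) hm b = Fval R m hm.le b + adiag R ⟨m, hm⟩ +
      2 * (∑ i : Fin m, (starRingEnd ℂ) (b ⟨m, hm⟩) *
        R ⟨m, hm⟩ (Fin.castLE hm.le i) * b (Fin.castLE hm.le i)).re := by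
  set M : Fin N := ⟨m, hm⟩ with hMdef
  set c : Fin m → Fin N := Fin.castLE hm.le with hcdef
  have hc : ∀ i : Fin m, Fin.castLE hm (Fin.castSucc i) = c i := fun i => rfl
  have hlast : Fin.castLE hm (Fin.last m) = M := rfl
  have hne : ∀ i : Fin m, c i ≠ M := by
    intro i h
    have h2 : (i : ℕ) = m := congrArg Fin.val h
    have h3 := i.2
    omega
  have hRbar1 : ∀ i : Fin m, Rbar R M (c i) = R M (c i) := by
    intro i; simp [Rbar, Ne.symm (hne i)]
  have hRbar2 : ∀ i : Fin m, Rbar R (c i) M = (starRingEnd ℂ) (R M (c i)) := by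
    intro i
    simp only [Rbar, if_neg (hne i)]
    exact (hR.apply (c i) M).symm
  have hRbar3 : Rbar R M M = (adiag R M : ℂ) := by simp [Rbar]
  rw [Fval_eq, Fval_eq]
  rw [Fin.sum_univ_castSucc]
  have hinner : ∀ (w : ℂ) (r : Fin N), ∑ j : Fin (m+1),
      w * Rbar R r (Fin.castLE hm j) * b (Fin.castLE hm j)
      = (∑ j : Fin m, w * Rbar R r (c j) * b (c j)) + w * Rbar R r M * b M := by
    intro w r
    rw [Fin.sum_univ_castSucc]
    rfl
  simp only [hinner, hc, hlast, hRbar1, hRbar2, hRbar3, Finset.sum_add_distrib]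
  set Z : ℂ := ∑ i : Fin m, (starRingEnd ℂ) (b M) * R M (c i) * b (c i) with hZ
  have hX : ∑ i : Fin m, (starRingEnd ℂ) (b (c i)) * (starRingEnd ℂ) (R M (c i)) * b M
      = (starRingEnd ℂ) Z := by
    rw [hZ, map_sum]
    refine Finset.sum_congr rfl fun i _ => ?_
    rw [_root_.map_mul, _root_.map_mul, Complex.conj_conj]
    ring
  have hD : (starRingEnd ℂ) (b M) * (adiag R M : ℂ) * b M = (adiag R M : ℂ) := by
    have h1 : b M * (starRingEnd ℂ) (b M) = 1 := by
      rw [Complex.mul_conj, ← Complex.sq_norm, hbm]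
      norm_num
    calc (starRingEnd ℂ) (b M) * (adiag R M : ℂ) * b M
        = (adiag R M : ℂ) * (b M * (starRingEnd ℂ) (b M)) := by ring
      _ = (adiag R M : ℂ) := by rw [h1, mul_one]
  rw [hX, hD]
  have : (∑ i : Fin m, ∑ j : Fin m,
      (starRingEnd ℂ) (b (c i)) * Rbar R (c i) (c j) * b (c j)) +
      (starRingEnd ℂ) Z + (Z + (adiag R M : ℂ))
    = ((∑ i : Fin m, ∑ j : Fin m,
      (starRingEnd ℂ) (b (c i)) * Rbar R (c i) (c j) * b (c j)) +
      (adiag R M : ℂ)) + (Z + (starRingEnd ℂ) Z) := by ring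
  rw [this, Complex.add_re, Complex.add_re, Complex.ofReal_re,
    Complex.add_conj, Complex.ofReal_re]

lemma Z_re_bound {N : ℕ} (R : Matrix (Fin N) (Fin N) ℂ) (m : ℕ) (hm : m < N)
    (b : Fin N → ℂ) (hb : ∀ i : Fin N, (i : ℕ) < m + 1 → ‖b i‖ = 1) :
    |(∑ i : Fin m, (starRingEnd ℂ) (b ⟨m, hm⟩) *
        R ⟨m, hm⟩ (Fin.castLE hm.le i) * b (Fin.castLE hm.le i)).re| ≤ delta R ⟨m, hm⟩ := by
  have hd : delta R ⟨m, hm⟩ = ∑ i : Fin m, ‖R ⟨m, hm⟩ (Fin.castLE hm.le i)‖ := by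
    rw [delta, sum_Iio_fin hm]
  rw [hd]
  refine (Complex.abs_re_le_norm _).trans ?_
  refine (norm_sum_le _ _).trans ?_
  refine Finset.sum_le_sum fun i _ => ?_
  rw [norm_mul, norm_mul, Complex.norm_conj]
  rw [hb ⟨m, hm⟩ (Nat.lt_succ_self m), hb (Fin.castLE hm.le i) (Nat.lt_succ_of_lt i.2)]
  simp


/-- Bounds on the increment `F(A) − F(B)` for a unimodular string `A` of length `l`
extending its prefix `B` of length `k`. -/
theorem stmt_5 (N : ℕ) (R : Matrix (Fin N) (Fin N) ℂ) (hR : R.IsHermitian)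
    (k l : ℕ) (hkl : k ≤ l) (hl : l ≤ N)
    (b : Fin N → ℂ) (hb : ∀ i : Fin N, (i : ℕ) < l → ‖b i‖ = 1) :
    4 * ∑ p ∈ Finset.univ.filter (fun p : Fin N => k ≤ (p : ℕ) ∧ (p : ℕ) < l),
        ∑ q ∈ Finset.Ioi p, delta R q ≤
      Fval R l hl b - Fval R k (hkl.trans hl) b ∧
    Fval R l hl b - Fval R k (hkl.trans hl) b ≤
      4 * ∑ p ∈ Finset.univ.filter (fun p : Fin N => k ≤ (p : ℕ) ∧ (p : ℕ) < l),
        (delta R p + ∑ q ∈ Finset.Ioi p, delta R q) := by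
  induction l, hkl using Nat.le_induction with
  | base =>
    have he : Finset.univ.filter (fun p : Fin N => k ≤ (p:ℕ) ∧ (p:ℕ) < k) = ∅ := by
      apply Finset.filter_false_of_mem
      intro p _
      omega
    simp [he]
  | succ l hkl ih =>
    have hlN : l < N := hl
    have ih' := ih (Nat.le_of_succ_le hl) (fun i hi => hb i (Nat.lt_succ_of_lt hi))
    set M : Fin N := ⟨l, hlN⟩ with hM
    have hfil : Finset.univ.filter (fun p : Fin N => k ≤ (p:ℕ) ∧ (p:ℕ) < l+1)
        = insert M (Finset.univ.filter (fun p : Fin N => k ≤ (p:ℕ) ∧ (p:ℕ) < l)) := by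
      ext p
      simp only [Finset.mem_filter, Finset.mem_insert, Finset.mem_univ, true_and]
      constructor
      · rintro ⟨h1, h2⟩
        by_cases hpl : (p:ℕ) = l
        · left; exact Fin.ext hpl
        · right; exact ⟨h1, by omega⟩
      · rintro (rfl | ⟨h1, h2⟩)
        · exact ⟨hkl, Nat.lt_succ_self l⟩
        · exact ⟨h1, Nat.lt_succ_of_lt h2⟩
    have hMnot : M ∉ Finset.univ.filter (fun p : Fin N => k ≤ (p:ℕ) ∧ (p:ℕ) < l) := by
      simp only [Finset.mem_filter, Finset.mem_univ, true_and, not_and]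
      intro _
      simp [hM]
    rw [hfil, Finset.sum_insert hMnot, Finset.sum_insert hMnot]
    have hstep := Fval_succ R hR l hlN b (hb M (Nat.lt_succ_self l))
    have hbound := abs_le.mp (Z_re_bound R l hlN b hb)
    have hE1 : Fval R (l+1) hl b = Fval R (l+1) hlN b := rfl
    have hE2 : Fval R l (Nat.le_of_succ_le hl) b = Fval R l hlN.le b := rfl
    have hE3 : Fval R k ((Nat.le_succ_of_le hkl).trans hl) b
        = Fval R k (hkl.trans (Nat.le_of_succ_le hl)) b := rfl
    rw [hE1, hE3, hstep]
    rw [hE2] at ih'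
    rw [adiag] at hstep
    obtain ⟨ihl, ihr⟩ := ih'
    rw [adiag]
    constructor <;> linarith [hbound.1, hbound.2]
end

section
/- With R, δ_k, and R̄ defined as in the trace-modification construction, the function F(A) = A^H R̄_{|A|} A on unimodular strings of length at most N is forward monotone: if B is a prefix of A (both unimodular strings of length ≤ N), then F(B) ≤ F(A). -/
open Matrix

lemma delta_nonneg {N : ℕ} (R : Matrix (Fin N) (Fin N) ℂ) (k : Fin N) : 0 ≤ delta R k :=
  Finset.sum_nonneg fun _ _ => norm_nonneg _

lemma step {N : ℕ} (R : Matrix (Fin N) (Fin N) ℂ) (hR : R.IsHermitian)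
    (m : ℕ) (hm1 : m + 1 ≤ N) (b : Fin N → ℂ)
    (hb : ∀ i : Fin N, (i : ℕ) ≤ m → ‖b i‖ = 1) :
    Fval R m (Nat.le_of_succ_le hm1) b ≤ Fval R (m + 1) hm1 b := by
  have hm : m ≤ N := Nat.le_of_succ_le hm1
  set M : Fin N := ⟨m, hm1⟩ with hMdef
  set E : Fin N → Fin N → ℂ := fun x y => (starRingEnd ℂ) (b x) * Rbar R x y * b y with hE
  have hbM : ‖b M‖ = 1 := hb M le_rfl
  have hbi : ∀ i : Fin m, ‖b (Fin.castLE hm i)‖ = 1 := fun i =>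
    hb _ (le_of_lt i.isLt)
  have expand : Fval R (m + 1) hm1 b = Fval R m hm b +
      ((∑ i : Fin m, (E (Fin.castLE hm i) M + E M (Fin.castLE hm i))) + E M M).re := by
    rw [Fval_eq, Fval_eq, ← Complex.add_re]
    congr 1
    have hc : ∀ i : Fin m, Fin.castLE hm1 (Fin.castSucc i) = Fin.castLE hm i := fun i => rfl
    have hl : Fin.castLE hm1 (Fin.last m) = M := rfl
    simp only [Fin.sum_univ_castSucc, hc, hl, hE]
    rw [Finset.sum_add_distrib, Finset.sum_add_distrib]
    ring
  rw [expand]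
  have key : 0 ≤ ((∑ i : Fin m, (E (Fin.castLE hm i) M + E M (Fin.castLE hm i))) + E M M).re := by
    rw [Complex.add_re, Complex.re_sum]
    have hEMM : (E M M).re = adiag R M := by
      have : E M M = ((adiag R M : ℝ) : ℂ) * ((starRingEnd ℂ) (b M) * b M) := by
        simp only [hE, Rbar, if_pos rfl, eq_self_iff_true, if_true]; ring
      rw [this]
      have h2 : (starRingEnd ℂ) (b M) * b M = ((‖b M‖)^2 : ℝ) := by
        rw [← Complex.normSq_eq_norm_sq, ← Complex.mul_conj]; ring
      rw [h2, hbM, ← Complex.ofReal_mul]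
      simp
    rw [hEMM]
    have hterm : ∀ i : Fin m,
        -(2 * ‖R M (Fin.castLE hm i)‖) ≤
          (E (Fin.castLE hm i) M + E M (Fin.castLE hm i)).re := by
      intro i
      set x := Fin.castLE hm i with hx
      have hne : x ≠ M := by
        intro h
        have : (x : ℕ) = m := by rw [h]
        simp [hx] at this
        omega
      have habs1 : ‖E x M‖ = ‖R M x‖ := by
        simp only [hE, Rbar, if_neg hne, norm_mul, Complex.norm_conj]
        rw [hbi i, hbM]
        have : R x M = (starRingEnd ℂ) (R M x) := by rw [← hR.apply M x]; simp
        rw [this, Complex.norm_conj]; ring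
      have habs2 : ‖E M x‖ = ‖R M x‖ := by
        simp only [hE, Rbar, if_neg (Ne.symm hne), norm_mul, Complex.norm_conj]
        rw [hbi i, hbM]; ring
      have h1 : -‖E x M‖ ≤ (E x M).re := by
        have := abs_le.mp (Complex.abs_re_le_norm (E x M)); linarith [this.1]
      have h2 : -‖E M x‖ ≤ (E M x).re := by
        have := abs_le.mp (Complex.abs_re_le_norm (E M x)); linarith [this.1]
      rw [Complex.add_re]
      rw [habs1] at h1; rw [habs2] at h2
      linarith
    have hsum : -(2 * delta R M) ≤
        ∑ i : Fin m, (E (Fin.castLE hm i) M + E M (Fin.castLE hm i)).re := by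
      have hIio : delta R M = ∑ i : Fin m, ‖R M (Fin.castLE hm i)‖ := by
        unfold delta
        refine Finset.sum_bij' (fun (j : Fin N) (hj : j ∈ Finset.Iio M) =>
            (⟨(j : ℕ), by have h := Finset.mem_Iio.mp hj; exact h⟩ : Fin m))
          (fun (i : Fin m) _ => Fin.castLE hm i) ?_ ?_ ?_ ?_ ?_
        · intro a ha; exact Finset.mem_univ _
        · intro a ha; simp [Finset.mem_Iio, Fin.lt_def]; exact a.isLt
        · intro a ha; rfl
        · intro a ha; rfl
        · intro a ha; rfl
      calc -(2 * delta R M) = ∑ i : Fin m, -(2 * ‖R M (Fin.castLE hm i)‖) := by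
            rw [hIio, Finset.mul_sum, ← Finset.sum_neg_distrib]
        _ ≤ _ := Finset.sum_le_sum fun i _ => hterm i
    have hfinal : 0 ≤ -(2 * delta R M) + adiag R M := by
      unfold adiag
      have : 0 ≤ ∑ j ∈ Finset.Ioi M, delta R j :=
        Finset.sum_nonneg fun j _ => delta_nonneg R j
      linarith
    linarith
  linarith

/-- Forward monotonicity of `F`: if `B` is a prefix of the unimodular string `A`, then
`F(B) ≤ F(A)`. -/
theorem stmt_6 (N : ℕ) (R : Matrix (Fin N) (Fin N) ℂ) (hR : R.IsHermitian)
    (k l : ℕ) (hkl : k ≤ l) (hl : l ≤ N)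
    (b : Fin N → ℂ) (hb : ∀ i : Fin N, (i : ℕ) < l → ‖b i‖ = 1) :
    Fval R k (hkl.trans hl) b ≤ Fval R l hl b := by
  have key : ∀ n, k ≤ n → n ≤ l → ∀ h : n ≤ N, Fval R k (hkl.trans hl) b ≤ Fval R n h b := by
    intro n hn
    induction n, hn using Nat.le_induction with
    | base => intro _ h; exact le_refl _
    | succ n hkn ih =>
      intro hnl h
      have hnN : n ≤ N := Nat.le_of_succ_le h
      refine (ih (Nat.le_of_succ_le hnl) hnN).trans ?_
      exact step R hR n h b fun i hi => hb i (lt_of_lt_of_le (Nat.lt_succ_of_le hi) hnl)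
  exact key l hkl le_rfl hl
end

section
/- Suppose g, o are unimodular vectors in ℂ^N, R is Hermitian, R̄ agrees with R off the diagonal, o maximizes s ↦ s^H R s over unimodular vectors, and g^H R̄ g ≥ (1 − 1/e)(o^H R̄ o). If Tr(R̄) ≤ Tr(R) and o^H R o ≥ 0, then g^H R g ≥ (1 − 1/e)(o^H R o). -/
open Matrix

lemma shift_identity {N : ℕ} (R Rb : Matrix (Fin N) (Fin N) ℂ)
    (hoff : ∀ i j, i ≠ j → Rb i j = R i j)
    (s : Fin N → ℂ) (hs : ∀ i, ‖s i‖ = 1) :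
    star s ⬝ᵥ Rb *ᵥ s = star s ⬝ᵥ R *ᵥ s + Matrix.trace Rb - Matrix.trace R := by
  have key : star s ⬝ᵥ Rb *ᵥ s - star s ⬝ᵥ R *ᵥ s = Matrix.trace Rb - Matrix.trace R := by
    simp only [dotProduct, mulVec, dotProduct, Pi.star_apply, Matrix.trace, Matrix.diag,
      ← Finset.sum_sub_distrib, ← mul_sub, ← sub_mul]
    rw [Finset.sum_congr rfl]
    intro i _
    rw [Finset.sum_eq_single i]
    · have h1 : s i * star (s i) = 1 := by
        rw [Complex.star_def, Complex.mul_conj]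
        norm_cast
        rw [← Complex.sq_norm, hs i]; norm_num
      linear_combination (Rb i i - R i i) * h1
    · intro j _ hj
      simp [hoff i j (Ne.symm hj)]
    · intro h; exact absurd (Finset.mem_univ i) h
  linear_combination key

/-- If `g` achieves a `(1 − 1/e)` guarantee for the modified quadratic form `sᴴ R̄ s`,
`o` is optimal for `sᴴ R s` over unimodular vectors with `oᴴ R o ≥ 0`, and
`Tr(R̄) ≤ Tr(R)`, then `g` achieves a `(1 − 1/e)` guarantee for the original form. -/
theorem stmt_10 (N : ℕ) (R Rb : Matrix (Fin N) (Fin N) ℂ)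
    (hR : R.IsHermitian) (hRb : Rb.IsHermitian)
    (hoff : ∀ i j, i ≠ j → Rb i j = R i j)
    (g o : Fin N → ℂ)
    (hg : ∀ i, ‖g i‖ = 1) (ho : ∀ i, ‖o i‖ = 1)
    (hopt : IsMaxOn (fun s : Fin N → ℂ => (star s ⬝ᵥ R *ᵥ s).re)
      {s : Fin N → ℂ | ∀ i, ‖s i‖ = 1} o)
    (hguar : (1 - 1 / Real.exp 1) * (star o ⬝ᵥ Rb *ᵥ o).re ≤ (star g ⬝ᵥ Rb *ᵥ g).re)
    (htr : (Matrix.trace Rb).re ≤ (Matrix.trace R).re)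
    (hnn : 0 ≤ (star o ⬝ᵥ R *ᵥ o).re) :
    (1 - 1 / Real.exp 1) * (star o ⬝ᵥ R *ᵥ o).re ≤ (star g ⬝ᵥ R *ᵥ g).re := by
  have hgid := shift_identity R Rb hoff g hg
  have hoid := shift_identity R Rb hoff o ho
  have hg' : (star g ⬝ᵥ Rb *ᵥ g).re
      = (star g ⬝ᵥ R *ᵥ g).re + (Matrix.trace Rb).re - (Matrix.trace R).re := by
    rw [hgid]; simp
  have ho' : (star o ⬝ᵥ Rb *ᵥ o).re
      = (star o ⬝ᵥ R *ᵥ o).re + (Matrix.trace Rb).re - (Matrix.trace R).re := by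
    rw [hoid]; simp
  have he : (0:ℝ) < 1 / Real.exp 1 := by positivity
  rw [hg', ho'] at hguar
  nlinarith [hguar, he, htr]
end

section
/- Suppose R is a 2N-dominant N×N Hermitian matrix, o maximizes s ↦ s^H R s over unimodular vectors with o^H R o ≥ 0, and g is a unimodular vector satisfying g^H R̄ g ≥ (1 − 1/e)(o^H R̄ o) where R̄ is the trace-modified matrix and o also maximizes s^H R̄ s. Then g^H R g ≥ (1 − 1/e + 1/(e(2N+1)))·(o^H R o). -/
open Matrix

lemma myswap {N : ℕ} (f : Fin N → Fin N → ℝ) :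
    ∑ i, ∑ j ∈ Finset.Ioi i, f i j = ∑ j, ∑ i ∈ Finset.Iio j, f i j :=
  Finset.sum_comm' (by intro x y; simp [Finset.mem_Ioi, Finset.mem_Iio])

lemma qexpand {N : ℕ} (M : Matrix (Fin N) (Fin N) ℂ) (s : Fin N → ℂ) :
    star s ⬝ᵥ M *ᵥ s = ∑ i, ∑ j, star (s i) * (M i j * s j) := by
  simp [dotProduct, mulVec, Finset.mul_sum]

lemma qdiff {N : ℕ} (R : Matrix (Fin N) (Fin N) ℂ) (s : Fin N → ℂ)
    (hs : ∀ i, ‖s i‖ = 1) :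
    (star s ⬝ᵥ Rbar R *ᵥ s).re
      = (star s ⬝ᵥ R *ᵥ s).re + (∑ i, adiag R i - ∑ i, (R i i).re) := by
  have hunit : ∀ i, star (s i) * s i = 1 := by
    intro i
    have h := Complex.mul_conj (s i)
    rw [Complex.normSq_eq_norm_sq, hs i] at h
    rw [Complex.star_def, mul_comm]
    simpa using h
  have hdiff : star s ⬝ᵥ Rbar R *ᵥ s - star s ⬝ᵥ R *ᵥ s
      = ∑ i, ((adiag R i : ℂ) - R i i) := by
    rw [qexpand, qexpand, ← Finset.sum_sub_distrib]
    refine Finset.sum_congr rfl fun i _ => ?_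
    rw [← Finset.sum_sub_distrib, Finset.sum_eq_single i]
    · have hb : Rbar R i i = (adiag R i : ℂ) := by simp [Rbar]
      rw [hb]
      have h3 : star (s i) * ((adiag R i : ℂ) * s i) - star (s i) * (R i i * s i)
          = ((adiag R i : ℂ) - R i i) * (star (s i) * s i) := by ring
      rw [h3, hunit i, mul_one]
    · intro j _ hj
      have : Rbar R i j = R i j := by rw [Rbar, if_neg (fun h : i = j => hj h.symm)]
      rw [this, sub_self]
    · intro h; exact absurd (Finset.mem_univ i) h
  have h2 : star s ⬝ᵥ Rbar R *ᵥ s = star s ⬝ᵥ R *ᵥ s + ∑ i, ((adiag R i : ℂ) - R i i) := by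
    linear_combination hdiff
  rw [h2]
  simp [Complex.add_re, Complex.re_sum, Complex.sub_re, Finset.sum_sub_distrib]

lemma qbound {N : ℕ} (R : Matrix (Fin N) (Fin N) ℂ) (s : Fin N → ℂ)
    (hs : ∀ i, ‖s i‖ = 1) :
    (star s ⬝ᵥ R *ᵥ s).re ≤ ∑ i, ∑ j, ‖R i j‖ := by
  calc (star s ⬝ᵥ R *ᵥ s).re ≤ ‖star s ⬝ᵥ R *ᵥ s‖ := Complex.re_le_norm _
    _ = ‖∑ i, ∑ j, star (s i) * (R i j * s j)‖ := by rw [qexpand]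
    _ ≤ ∑ i, ‖∑ j, star (s i) * (R i j * s j)‖ := norm_sum_le _ _
    _ ≤ ∑ i, ∑ j, ‖star (s i) * (R i j * s j)‖ :=
        Finset.sum_le_sum fun i _ => norm_sum_le _ _
    _ = ∑ i, ∑ j, ‖R i j‖ := by
        refine Finset.sum_congr rfl fun i _ => Finset.sum_congr rfl fun j _ => ?_
        simp [norm_mul, hs]

lemma finarith (e c A D G : ℝ) (he : 0 < e) (hc : 0 < c)
    (hkey : A ≤ c * (-D)) (hguar : (1 - 1/e) * (A + D) ≤ G + D) :
    (1 - 1/e + 1/(e*c)) * A ≤ G := by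
  have h1 : 1/(e*c) * A ≤ (1/e) * (-D) := by
    have h2 : 1/(e*c) * A = (1/e) * (A / c) := by
      field_simp
    rw [h2]
    refine mul_le_mul_of_nonneg_left ?_ (by positivity)
    rw [div_le_iff₀ hc]
    linarith
  have hexp : (1 - 1/e) * (A + D) = (1 - 1/e) * A + D - (1/e) * D := by ring
  have hgoal : (1 - 1/e + 1/(e*c)) * A = (1 - 1/e) * A + 1/(e*c) * A := by ring
  rw [hgoal]
  linarith

/-- Improved guarantee for `2N`-dominant matrices: if `o` maximizes both `sᴴ R s` and
`sᴴ R̄ s` over unimodular vectors, `oᴴ R o ≥ 0`, and the unimodular `g` satisfies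
`gᴴ R̄ g ≥ (1 − 1/e) oᴴ R̄ o`, then `gᴴ R g ≥ (1 − 1/e + 1/(e(2N+1))) oᴴ R o`. -/
theorem stmt_16 (N : ℕ) (hN : 0 < N) (R : Matrix (Fin N) (Fin N) ℂ) (hR : R.IsHermitian)
    (hdom : ∀ i, 2 * (N : ℝ) * ∑ j ∈ Finset.univ.erase i, ‖R i j‖ ≤ (R i i).re)
    (g o : Fin N → ℂ)
    (hg : ∀ i, ‖g i‖ = 1) (ho : ∀ i, ‖o i‖ = 1)
    (hopt : IsMaxOn (fun s : Fin N → ℂ => (star s ⬝ᵥ R *ᵥ s).re)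
      {s : Fin N → ℂ | ∀ i, ‖s i‖ = 1} o)
    (hoptb : IsMaxOn (fun s : Fin N → ℂ => (star s ⬝ᵥ Rbar R *ᵥ s).re)
      {s : Fin N → ℂ | ∀ i, ‖s i‖ = 1} o)
    (hnn : 0 ≤ (star o ⬝ᵥ R *ᵥ o).re)
    (hguar : (1 - 1 / Real.exp 1) * (star o ⬝ᵥ Rbar R *ᵥ o).re ≤
      (star g ⬝ᵥ Rbar R *ᵥ g).re) :
    (1 - 1 / Real.exp 1 + 1 / (Real.exp 1 * (2 * N + 1))) * (star o ⬝ᵥ R *ᵥ o).re ≤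
      (star g ⬝ᵥ R *ᵥ g).re := by
  set S : ℝ := ∑ k, delta R k with hSdef
  have hdel : ∀ k, 0 ≤ delta R k := fun k => Finset.sum_nonneg fun i _ => norm_nonneg _
  have hS : 0 ≤ S := Finset.sum_nonneg fun k _ => hdel k
  set T0 : ℝ := ∑ i, (R i i).re with hT0def
  have habs_symm : ∀ i j, ‖R i j‖ = ‖R j i‖ := by
    intro i j
    rw [← hR.apply i j]
    simp
  have herase : ∀ i : Fin N, (Finset.univ.erase i) = Finset.Iio i ∪ Finset.Ioi i := by
    intro i; ext j
    simp only [Finset.mem_erase, Finset.mem_univ, and_true, Finset.mem_union,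
      Finset.mem_Iio, Finset.mem_Ioi]
    exact ne_iff_lt_or_gt
  have hdisj : ∀ i : Fin N, Disjoint (Finset.Iio i) (Finset.Ioi i) := by
    intro i
    exact Finset.disjoint_left.2
      (by intro a ha hb; simp at ha hb; exact absurd (ha.trans hb) (lt_irrefl a))
  have hsum_erase : ∀ i, ∑ j ∈ Finset.univ.erase i, ‖R i j‖
      = delta R i + ∑ j ∈ Finset.Ioi i, ‖R i j‖ := by
    intro i
    rw [herase i, Finset.sum_union (hdisj i)]
    rfl
  have hIoiS : ∑ i, ∑ j ∈ Finset.Ioi i, ‖R i j‖ = S := by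
    have h : ∀ i, ∑ j ∈ Finset.Ioi i, ‖R i j‖
        = ∑ j ∈ Finset.Ioi i, ‖R j i‖ :=
      fun i => Finset.sum_congr rfl fun j _ => habs_symm i j
    rw [Finset.sum_congr rfl fun i _ => h i, myswap (fun i j => ‖R j i‖)]
    rfl
  have h2S : ∑ i, ∑ j ∈ Finset.univ.erase i, ‖R i j‖ = 2 * S := by
    rw [Finset.sum_congr rfl fun i _ => hsum_erase i, Finset.sum_add_distrib, hIoiS]
    ring
  have hT0 : 4 * (N : ℝ) * S ≤ T0 := by
    have h := Finset.sum_le_sum (fun i (_ : i ∈ Finset.univ) => hdom i)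
    rw [← Finset.mul_sum, h2S] at h
    linarith
  have hTr : ∑ i, adiag R i ≤ (4 * N - 2) * S := by
    have hswap : ∑ k, ∑ j ∈ Finset.Ioi k, delta R j
        = ∑ j, ∑ _k ∈ Finset.Iio j, delta R j := myswap (fun _k j => delta R j)
    have hsum2 : ∑ j, ∑ _k ∈ Finset.Iio j, delta R j ≤ ((N : ℝ) - 1) * S := by
      rw [hSdef, Finset.mul_sum]
      refine Finset.sum_le_sum fun j _ => ?_
      rw [Finset.sum_const, Fin.card_Iio, nsmul_eq_mul]
      have hj : ((j : ℕ) : ℝ) ≤ (N : ℝ) - 1 := by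
        have h1 : (j : ℕ) + 1 ≤ N := j.isLt
        have h2 := Nat.cast_le (α := ℝ) |>.2 h1
        push_cast at h2
        linarith
      exact mul_le_mul_of_nonneg_right hj (hdel j)
    unfold adiag
    rw [Finset.sum_add_distrib]
    have h1 : ∑ k, 2 * delta R k = 2 * S := by rw [hSdef, Finset.mul_sum]
    have h2 : ∑ k, 4 * ∑ j ∈ Finset.Ioi k, delta R j ≤ 4 * ((N : ℝ) - 1) * S := by
      rw [← Finset.mul_sum, hswap]
      nlinarith [hsum2]
    rw [h1]
    linarith
  -- diagonal entries: abs = re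
  have hdiag_abs : ∀ i, ‖R i i‖ = (R i i).re := by
    intro i
    have hconj : (starRingEnd ℂ) (R i i) = R i i := by
      have h := hR.apply i i
      simpa [Matrix.conjTranspose_apply] using h
    have him : (R i i).im = 0 := Complex.conj_eq_iff_im.1 hconj
    have hre : 0 ≤ (R i i).re := by
      refine le_trans ?_ (hdom i)
      positivity
    have hz : R i i = ((R i i).re : ℂ) := Complex.ext rfl (by simp [him])
    conv_lhs => rw [hz]
    rw [Complex.norm_real, Real.norm_eq_abs, abs_of_nonneg hre]
  -- bound on o^H R o
  set A : ℝ := (star o ⬝ᵥ R *ᵥ o).re with hAdef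
  have hA_le : A ≤ T0 + 2 * S := by
    have h := qbound R o ho
    have hsplit : ∑ i, ∑ j, ‖R i j‖ = T0 + 2 * S := by
      have h1 : ∀ i : Fin N, ∑ j, ‖R i j‖
          = (R i i).re + ∑ j ∈ Finset.univ.erase i, ‖R i j‖ := by
        intro i
        rw [← hdiag_abs i]
        exact (Finset.add_sum_erase _ _ (Finset.mem_univ i)).symm
      rw [Finset.sum_congr rfl fun i _ => h1 i, Finset.sum_add_distrib, h2S]
    rw [hsplit] at h
    exact h
  -- key trace inequality
  have hNR : (1 : ℝ) ≤ (N : ℝ) := by exact_mod_cast hN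
  have hkey : A ≤ (2 * (N : ℝ) + 1) * (T0 - ∑ i, adiag R i) := by
    nlinarith [hT0, hTr, hA_le, hS, hNR]
  set D : ℝ := (∑ i, adiag R i) - T0 with hDdef
  have hAb : (star o ⬝ᵥ Rbar R *ᵥ o).re = A + D := by
    rw [qdiff R o ho]
  have hGb : (star g ⬝ᵥ Rbar R *ᵥ g).re = (star g ⬝ᵥ R *ᵥ g).re + D := by
    rw [qdiff R g hg]
  have he : (0 : ℝ) < Real.exp 1 := Real.exp_pos 1
  have hc : (0 : ℝ) < 2 * (N : ℝ) + 1 := by linarith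
  have hkey' : A ≤ (2 * (N : ℝ) + 1) * (-D) := by
    rw [hDdef]
    nlinarith [hkey]
  have hguar' : (1 - 1 / Real.exp 1) * (A + D) ≤ (star g ⬝ᵥ R *ᵥ g).re + D := by
    rw [← hAb, ← hGb]; exact hguar
  exact finarith (Real.exp 1) (2 * (N : ℝ) + 1) A D _ he hc hkey' hguar'
end

section
/- If an N×N Hermitian matrix R is 2N-dominant, then for every unimodular vector s and the optimal unimodular vector o maximizing the quadratic form, s^H R s ≥ ((2N−1)/(2N+1))·(o^H R o). -/
open Matrix

lemma stmt17_aux (N : ℕ) (R : Matrix (Fin N) (Fin N) ℂ)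
    (v : Fin N → ℂ) (hv : ∀ i, ‖v i‖ = 1) :
    (star v ⬝ᵥ R *ᵥ v).re
      = (∑ i, (R i i).re)
        + ∑ i, ∑ j ∈ Finset.univ.erase i, ((starRingEnd ℂ) (v i) * R i j * v j).re := by
  have hdot : star v ⬝ᵥ R *ᵥ v = ∑ i, ∑ j, (starRingEnd ℂ) (v i) * R i j * v j := by
    simp [dotProduct, mulVec, Finset.mul_sum, mul_assoc]
  rw [hdot, Complex.re_sum]
  rw [← Finset.sum_add_distrib]
  refine Finset.sum_congr rfl fun i _ => ?_
  rw [Complex.re_sum, ← Finset.add_sum_erase _ _ (Finset.mem_univ i)]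
  congr 1
  have h1 : (starRingEnd ℂ) (v i) * v i = 1 := by
    rw [mul_comm, Complex.mul_conj]
    norm_cast
    rw [Complex.normSq_eq_norm_sq, hv i]; norm_num
  have : (starRingEnd ℂ) (v i) * R i i * v i = R i i := by
    rw [mul_comm _ (R i i), mul_assoc, h1, mul_one]
  rw [this]

/-- If `R` is `2N`-dominant, every unimodular `s` achieves at least a
`(2N−1)/(2N+1)` fraction of the optimal unimodular value. -/
theorem stmt_17 (N : ℕ) (hN : 0 < N) (R : Matrix (Fin N) (Fin N) ℂ) (hR : R.IsHermitian)
    (hdom : ∀ i, 2 * (N : ℝ) * ∑ j ∈ Finset.univ.erase i, ‖R i j‖ ≤ (R i i).re)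
    (o : Fin N → ℂ) (ho : ∀ i, ‖o i‖ = 1)
    (hopt : IsMaxOn (fun s : Fin N → ℂ => (star s ⬝ᵥ R *ᵥ s).re)
      {s : Fin N → ℂ | ∀ i, ‖s i‖ = 1} o)
    (s : Fin N → ℂ) (hs : ∀ i, ‖s i‖ = 1) :
    ((2 * (N : ℝ) - 1) / (2 * (N : ℝ) + 1)) * (star o ⬝ᵥ R *ᵥ o).re ≤
      (star s ⬝ᵥ R *ᵥ s).re := by
  set T : ℝ := ∑ i, (R i i).re with hT
  set E : ℝ := ∑ i, ∑ j ∈ Finset.univ.erase i, ‖R i j‖ with hE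
  have habs : ∀ (v : Fin N → ℂ), (∀ i, ‖v i‖ = 1) → ∀ i j,
      |((starRingEnd ℂ) (v i) * R i j * v j).re| ≤ ‖R i j‖ := by
    intro v hv i j
    calc |((starRingEnd ℂ) (v i) * R i j * v j).re|
        ≤ ‖(starRingEnd ℂ) (v i) * R i j * v j‖ := Complex.abs_re_le_norm _
      _ = ‖R i j‖ := by
          simp [_root_.map_mul, hv i, hv j]
  have hlow : T - E ≤ (star s ⬝ᵥ R *ᵥ s).re := by
    rw [stmt17_aux N R s hs]
    have : -E ≤ ∑ i, ∑ j ∈ Finset.univ.erase i, ((starRingEnd ℂ) (s i) * R i j * s j).re := by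
      rw [hE, ← Finset.sum_neg_distrib]
      refine Finset.sum_le_sum fun i _ => ?_
      rw [← Finset.sum_neg_distrib]
      refine Finset.sum_le_sum fun j _ => ?_
      have := habs s hs i j
      linarith [abs_le.mp this |>.1]
    linarith
  have hhigh : (star o ⬝ᵥ R *ᵥ o).re ≤ T + E := by
    rw [stmt17_aux N R o ho]
    have : ∑ i, ∑ j ∈ Finset.univ.erase i, ((starRingEnd ℂ) (o i) * R i j * o j).re ≤ E := by
      rw [hE]
      refine Finset.sum_le_sum fun i _ => Finset.sum_le_sum fun j _ => ?_
      have := habs o ho i j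
      linarith [abs_le.mp this |>.1, abs_le.mp this |>.2]
    linarith
  have hdomsum : 2 * (N : ℝ) * E ≤ T := by
    rw [hE, hT, Finset.mul_sum]
    exact Finset.sum_le_sum fun i _ => hdom i
  have hN1 : (1 : ℝ) ≤ (N : ℝ) := by exact_mod_cast hN
  have hc : 0 ≤ (2 * (N : ℝ) - 1) / (2 * (N : ℝ) + 1) := by
    apply div_nonneg <;> linarith
  have hEnn : 0 ≤ E := by
    rw [hE]
    exact Finset.sum_nonneg fun i _ => Finset.sum_nonneg fun j _ => norm_nonneg _
  calc ((2 * (N : ℝ) - 1) / (2 * (N : ℝ) + 1)) * (star o ⬝ᵥ R *ᵥ o).re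
      ≤ ((2 * (N : ℝ) - 1) / (2 * (N : ℝ) + 1)) * (T + E) := by
        exact mul_le_mul_of_nonneg_left hhigh hc
    _ ≤ T - E := by
        rw [div_mul_eq_mul_div, div_le_iff₀ (by linarith)]
        nlinarith
    _ ≤ (star s ⬝ᵥ R *ᵥ s).re := hlow
end
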